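/- Let φ be a continuous function on [0,∞] convex on (0,∞) with φ*(λ) := inf_{x ∈ [0,∞]}(xλ + φ(x) − φ(0)). Then φ*(λ) = ∫_0^∞ min{λ + φ'(t), 0} dt for every λ ∈ [0,∞). -/

import Mathlib

open Set Filter MeasureTheory


private lemma convAux.hasDeriv {φ : ℝ → ℝ} (hconv : ConvexOn ℝ (Set.Ioi 0) φ) {t : ℝ}
    (ht : 0 < t) : HasDerivWithinAt φ (derivWithin φ (Set.Ioi t) t) (Set.Ioi t) t := by
  have hmono : MonotoneOn (slope φ t) (Set.Ioi t) := by
    intro y hy z hz hyz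
    rw [slope_def_field, slope_def_field]
    exact hconv.secant_mono ht (ht.trans hy) (ht.trans hz)
      (ne_of_gt hy) (ne_of_gt hz) hyz
  have hbdd : BddBelow (slope φ t '' Set.Ioi t) := by
    refine ⟨(φ t - φ (t/2)) / (t - t/2), ?_⟩
    rintro _ ⟨y, hy, rfl⟩
    rw [slope_def_field]
    exact hconv.slope_mono_adjacent (half_pos ht) (ht.trans hy) (half_lt_self ht) hy
  have htend := hmono.tendsto_nhdsGT hbdd
  have hH : HasDerivWithinAt φ (sInf (slope φ t '' Set.Ioi t)) (Set.Ioi t) t :=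
    (hasDerivWithinAt_iff_tendsto_slope' notMem_Ioi_self).2 htend
  exact hH.differentiableWithinAt.hasDerivWithinAt

private lemma convAux.slope_le {φ : ℝ → ℝ} (hconv : ConvexOn ℝ (Set.Ioi 0) φ)
    {φ' : ℝ → ℝ} (hd : ∀ t ∈ Set.Ioi (0:ℝ), HasDerivWithinAt φ (φ' t) (Set.Ioi t) t)
    {x y : ℝ} (hx : 0 < x) (hxy : x < y) : (φ y - φ x) / (y - x) ≤ φ' y := by
  have hy : (0:ℝ) < y := hx.trans hxy
  have htend : Tendsto (slope φ y) (nhdsWithin y (Set.Ioi y)) (nhds (φ' y)) :=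
    (hasDerivWithinAt_iff_tendsto_slope' notMem_Ioi_self).1 (hd y hy)
  refine ge_of_tendsto htend ?_
  filter_upwards [self_mem_nhdsWithin] with z hz
  rw [slope_def_field]
  exact hconv.slope_mono_adjacent hx (hy.trans hz) hxy hz

private lemma convAux.mono {φ : ℝ → ℝ} (hconv : ConvexOn ℝ (Set.Ioi 0) φ)
    {φ' : ℝ → ℝ} (hd : ∀ t ∈ Set.Ioi (0:ℝ), HasDerivWithinAt φ (φ' t) (Set.Ioi t) t) :
    MonotoneOn φ' (Set.Ioi 0) := by
  intro x hx y hy hxy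
  rcases eq_or_lt_of_le hxy with rfl | hxy
  · exact le_rfl
  have h1 : φ' x ≤ (φ y - φ x) / (y - x) := by
    have := hconv.le_slope_of_hasDerivWithinAt_Ioi hx hy hxy (hd x hx)
    rwa [slope_def_field] at this
  exact h1.trans (convAux.slope_le hconv hd hx hxy)

private lemma convAux.nonpos {φ : ℝ → ℝ} {φtop : ℝ}
    (htop : Filter.Tendsto φ Filter.atTop (nhds φtop))
    (hconv : ConvexOn ℝ (Set.Ioi 0) φ)
    {φ' : ℝ → ℝ} (hd : ∀ t ∈ Set.Ioi (0:ℝ), HasDerivWithinAt φ (φ' t) (Set.Ioi t) t)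
    {t : ℝ} (ht : 0 < t) : φ' t ≤ 0 := by
  by_contra h
  push_neg at h
  have key : ∀ x, t < x → φ t + φ' t * (x - t) ≤ φ x := by
    intro x hx
    have h1 : φ' t ≤ (φ x - φ t) / (x - t) := by
      have := hconv.le_slope_of_hasDerivWithinAt_Ioi ht (ht.trans hx) hx (hd t ht)
      rwa [slope_def_field] at this
    have h2 : φ' t * (x - t) ≤ φ x - φ t :=
      (le_div_iff₀ (by linarith)).1 h1
    linarith
  have hlin : Tendsto (fun x : ℝ => φ t + φ' t * (x - t)) atTop atTop := by
    apply tendsto_atTop_add_const_left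
    exact (tendsto_atTop_add_const_right _ (-t) tendsto_id).const_mul_atTop h
  have : Tendsto φ atTop atTop :=
    tendsto_atTop_mono' atTop (by filter_upwards [eventually_gt_atTop t] with x hx using key x hx)
      hlin
  exact not_tendsto_atTop_of_tendsto_nhds htop this

private lemma convAux.ftc {φ φ' : ℝ → ℝ}
    (hc : ContinuousOn φ (Set.Ici 0))
    (hd : ∀ t ∈ Set.Ioi (0:ℝ), HasDerivWithinAt φ (φ' t) (Set.Ioi t) t)
    (hmono : MonotoneOn φ' (Set.Ioi 0))
    {a b : ℝ} (ha : 0 < a) (hab : a ≤ b) :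
    ∫ t in Set.Ioc a b, φ' t = φ b - φ a := by
  rw [← intervalIntegral.integral_of_le hab]
  refine intervalIntegral.integral_eq_sub_of_hasDeriv_right_of_le hab
    (hc.mono fun x hx => le_trans ha.le hx.1) (fun x hx => hd x (ha.trans hx.1)) ?_
  refine MonotoneOn.intervalIntegrable ?_
  rw [uIcc_of_le hab]
  exact hmono.mono fun x hx => lt_of_lt_of_le ha hx.1

private lemma convAux.anti {φ φ' : ℝ → ℝ} {φtop : ℝ}
    (hc : ContinuousOn φ (Set.Ici 0))
    (htop : Filter.Tendsto φ Filter.atTop (nhds φtop))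
    (hconv : ConvexOn ℝ (Set.Ioi 0) φ)
    (hd : ∀ t ∈ Set.Ioi (0:ℝ), HasDerivWithinAt φ (φ' t) (Set.Ioi t) t)
    (hmono : MonotoneOn φ' (Set.Ioi 0))
    {x y : ℝ} (hx : 0 ≤ x) (hxy : x ≤ y) : φ y ≤ φ x := by
  have hnp : ∀ t ∈ Set.Ioi (0:ℝ), φ' t ≤ 0 := fun t ht =>
    convAux.nonpos htop hconv hd ht
  have key : ∀ u v : ℝ, 0 < u → u ≤ v → φ v ≤ φ u := by
    intro u v hu huv
    have := convAux.ftc hc hd hmono hu huv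
    have h2 : ∫ t in Set.Ioc u v, φ' t ≤ 0 :=
      setIntegral_nonpos measurableSet_Ioc fun t ht => hnp t (hu.trans ht.1)
    linarith
  rcases eq_or_lt_of_le hx with rfl | hx
  · rcases eq_or_lt_of_le hxy with rfl | hy
    · exact le_rfl
    · have htendl : Tendsto φ (nhdsWithin 0 (Set.Ioi 0)) (nhds (φ 0)) :=
        ((hc 0 self_mem_Ici).mono Ioi_subset_Ici_self).tendsto
      refine ge_of_tendsto htendl ?_
      filter_upwards [Ioo_mem_nhdsGT hy] with s hs
      exact key s y hs.1 hs.2.le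
  · exact key x y hx hxy

private lemma convAux.ge_top {φ φ' : ℝ → ℝ} {φtop : ℝ}
    (hc : ContinuousOn φ (Set.Ici 0))
    (htop : Filter.Tendsto φ Filter.atTop (nhds φtop))
    (hconv : ConvexOn ℝ (Set.Ioi 0) φ)
    (hd : ∀ t ∈ Set.Ioi (0:ℝ), HasDerivWithinAt φ (φ' t) (Set.Ioi t) t)
    (hmono : MonotoneOn φ' (Set.Ioi 0))
    {x : ℝ} (hx : 0 ≤ x) : φtop ≤ φ x := by
  refine le_of_tendsto htop ?_
  filter_upwards [eventually_ge_atTop x] with y hy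
  exact convAux.anti hc htop hconv hd hmono hx hy

private lemma convAux.ftc0 {φ φ' : ℝ → ℝ} {φtop : ℝ}
    (hc : ContinuousOn φ (Set.Ici 0))
    (htop : Filter.Tendsto φ Filter.atTop (nhds φtop))
    (hconv : ConvexOn ℝ (Set.Ioi 0) φ)
    (hd : ∀ t ∈ Set.Ioi (0:ℝ), HasDerivWithinAt φ (φ' t) (Set.Ioi t) t)
    (hmono : MonotoneOn φ' (Set.Ioi 0))
    {b : ℝ} (hb : 0 ≤ b) :
    IntegrableOn φ' (Set.Ioc 0 b) ∧ ∫ t in Set.Ioc 0 b, φ' t = φ b - φ 0 := by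
  rcases eq_or_lt_of_le hb with rfl | hb
  · simp
  have hnp : ∀ t ∈ Set.Ioi (0:ℝ), φ' t ≤ 0 := fun t ht => convAux.nonpos htop hconv hd ht
  set a : ℕ → ℝ := fun n => b / (n + 1) with ha_def
  have ha_pos : ∀ n, 0 < a n := fun n => div_pos hb (by positivity)
  have ha_le : ∀ n, a n ≤ b := fun n => by
    rw [ha_def]
    calc b / (n + 1 : ℝ) ≤ b / 1 := by
          apply div_le_div_of_nonneg_left hb.le one_pos; push_cast; linarith
      _ = b := div_one b
  have ha_tendsto : Tendsto a atTop (nhds 0) := by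
    have : Tendsto (fun n : ℕ => (n : ℝ) + 1) atTop atTop :=
      tendsto_atTop_add_const_right _ 1 tendsto_natCast_atTop_atTop
    simpa [ha_def] using Tendsto.div_atTop (tendsto_const_nhds (x := b)) this
  have hfi : ∀ n, IntegrableOn φ' (Set.Ioc (a n) b) := by
    intro n
    have : IntervalIntegrable φ' volume (a n) b := by
      refine MonotoneOn.intervalIntegrable ?_
      rw [uIcc_of_le (ha_le n)]
      exact hmono.mono fun x hx => lt_of_lt_of_le (ha_pos n) hx.1
    exact (intervalIntegrable_iff_integrableOn_Ioc_of_le (ha_le n)).1 this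
  have hval : ∀ n, ∫ t in Set.Ioc (a n) b, φ' t = φ b - φ (a n) := fun n =>
    convAux.ftc hc hd hmono (ha_pos n) (ha_le n)
  have hnorm : ∀ n, ∫ t in Set.Ioc (a n) b, ‖φ' t‖ = φ (a n) - φ b := by
    intro n
    have : ∀ t ∈ Set.Ioc (a n) b, ‖φ' t‖ = -φ' t := fun t ht =>
      Real.norm_of_nonpos (hnp t ((ha_pos n).trans ht.1))
    rw [setIntegral_congr_fun measurableSet_Ioc this, integral_neg, hval n]
    ring
  have hbound : ∀ n, ∫ t in Set.Ioc (a n) b, ‖φ' t‖ ≤ φ 0 - φ b := by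
    intro n
    rw [hnorm n]
    have := convAux.anti hc htop hconv hd hmono (le_refl 0) (ha_pos n).le
    linarith
  have hint : IntegrableOn φ' (Set.Ioc 0 b) := by
    refine integrableOn_Ioc_of_intervalIntegral_norm_bounded_left (I := φ 0 - φ b) hfi ha_tendsto ?_
    exact Filter.Eventually.of_forall hbound
  refine ⟨hint, ?_⟩
  have hsm : ∀ n : ℕ, MeasurableSet (Set.Ioc (a n) b) := fun n => measurableSet_Ioc
  have hsmono : Monotone fun n => Set.Ioc (a n) b := by
    intro m n hmn
    apply Set.Ioc_subset_Ioc_left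
    apply div_le_div_of_nonneg_left hb.le (by positivity)
    exact_mod_cast by omega
  have hU : (⋃ n, Set.Ioc (a n) b) = Set.Ioc 0 b := by
    ext x
    simp only [Set.mem_iUnion, Set.mem_Ioc]
    constructor
    · rintro ⟨n, h1, h2⟩; exact ⟨(ha_pos n).trans h1, h2⟩
    · rintro ⟨h1, h2⟩
      obtain ⟨n, hn⟩ := (ha_tendsto.eventually (gt_mem_nhds h1)).exists
      exact ⟨n, hn, h2⟩
  have htend := tendsto_setIntegral_of_monotone hsm hsmono (hU ▸ hint)
  rw [hU] at htend
  have htend2 : Tendsto (fun n => ∫ t in Set.Ioc (a n) b, φ' t) atTop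
      (nhds (φ b - φ 0)) := by
    have hφa : Tendsto (fun n => φ (a n)) atTop (nhds (φ 0)) := by
      refine ((hc 0 self_mem_Ici).tendsto).comp ?_
      refine tendsto_nhdsWithin_of_tendsto_nhds_of_eventually_within _ ha_tendsto ?_
      exact Filter.Eventually.of_forall fun n => (ha_pos n).le
    simpa [hval] using (tendsto_const_nhds (x := φ b)).sub hφa
  exact tendsto_nhds_unique htend htend2

private lemma convAux.Pval {φ φ' : ℝ → ℝ} {φtop : ℝ} (lam : ℝ)
    (hc : ContinuousOn φ (Set.Ici 0))
    (htop : Filter.Tendsto φ Filter.atTop (nhds φtop))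
    (hconv : ConvexOn ℝ (Set.Ioi 0) φ)
    (hd : ∀ t ∈ Set.Ioi (0:ℝ), HasDerivWithinAt φ (φ' t) (Set.Ioi t) t)
    (hmono : MonotoneOn φ' (Set.Ioi 0))
    {x : ℝ} (hx : 0 ≤ x) :
    IntegrableOn (fun t => lam + φ' t) (Set.Ioc 0 x) ∧
      ∫ t in Set.Ioc 0 x, (lam + φ' t) = x * lam + φ x - φ 0 := by
  obtain ⟨hint, hval⟩ := convAux.ftc0 hc htop hconv hd hmono hx
  have hconst : IntegrableOn (fun _ : ℝ => lam) (Set.Ioc 0 x) := by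
    apply (integrableOn_const_iff (C := lam)).2
    right
    simp [Real.volume_Ioc]
  refine ⟨hconst.add hint, ?_⟩
  rw [integral_add hconst hint, hval, setIntegral_const]
  simp [Real.volume_Ioc, ENNReal.toReal_ofReal hx, smul_eq_mul, max_eq_left hx]
  ring

private lemma convAux.ftcTop {φ φ' : ℝ → ℝ} {φtop : ℝ}
    (hc : ContinuousOn φ (Set.Ici 0))
    (htop : Filter.Tendsto φ Filter.atTop (nhds φtop))
    (hconv : ConvexOn ℝ (Set.Ioi 0) φ)
    (hd : ∀ t ∈ Set.Ioi (0:ℝ), HasDerivWithinAt φ (φ' t) (Set.Ioi t) t)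
    (hmono : MonotoneOn φ' (Set.Ioi 0)) :
    IntegrableOn φ' (Set.Ioi 0) ∧ ∫ t in Set.Ioi (0:ℝ), φ' t = φtop - φ 0 := by
  have hnp : ∀ t ∈ Set.Ioi (0:ℝ), φ' t ≤ 0 := fun t ht => convAux.nonpos htop hconv hd ht
  set b : ℕ → ℝ := fun n => (n : ℝ) + 1 with hb_def
  have hb_pos : ∀ n, (0:ℝ) ≤ b n := fun n => by positivity
  have hb_tendsto : Tendsto b atTop atTop :=
    tendsto_atTop_add_const_right _ 1 tendsto_natCast_atTop_atTop
  have hfi : ∀ n, IntegrableOn φ' (Set.Ioc 0 (b n)) := fun n =>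
    (convAux.ftc0 hc htop hconv hd hmono (hb_pos n)).1
  have hval : ∀ n, ∫ t in Set.Ioc 0 (b n), φ' t = φ (b n) - φ 0 := fun n =>
    (convAux.ftc0 hc htop hconv hd hmono (hb_pos n)).2
  have hnorm : ∀ n, ∫ t in (0:ℝ)..(b n), ‖φ' t‖ ≤ φ 0 - φtop := by
    intro n
    rw [intervalIntegral.integral_of_le (hb_pos n)]
    have h1 : ∀ t ∈ Set.Ioc (0:ℝ) (b n), ‖φ' t‖ = -φ' t := fun t ht =>
      Real.norm_of_nonpos (hnp t ht.1)
    rw [setIntegral_congr_fun measurableSet_Ioc h1, integral_neg, hval n]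
    have := convAux.ge_top hc htop hconv hd hmono (hb_pos n)
    linarith
  have hint : IntegrableOn φ' (Set.Ioi 0) := by
    refine integrableOn_Ioi_of_intervalIntegral_norm_bounded (φ 0 - φtop) 0 hfi hb_tendsto ?_
    exact Filter.Eventually.of_forall hnorm
  refine ⟨hint, ?_⟩
  have htend := intervalIntegral_tendsto_integral_Ioi 0 hint hb_tendsto
  have htend2 : Tendsto (fun n => ∫ t in (0:ℝ)..(b n), φ' t) atTop (nhds (φtop - φ 0)) := by
    have hφb : Tendsto (fun n => φ (b n)) atTop (nhds φtop) := htop.comp hb_tendsto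
    have : ∀ n, ∫ t in (0:ℝ)..(b n), φ' t = φ (b n) - φ 0 := fun n => by
      rw [intervalIntegral.integral_of_le (hb_pos n), hval n]
    simpa [this] using hφb.sub (tendsto_const_nhds (x := φ 0))
  exact tendsto_nhds_unique htend htend2

/-- The transform of Legendre type: `φ*(λ) = inf_{x ∈ [0,∞]} (xλ + φ(x) − φ(0))`.
(For `λ ≥ 0` the contribution of the point `x = ∞` never goes below the infimum over
`[0,∞)`, since `φ` is decreasing towards its limit at `∞`; so the infimum over `[0,∞]`
coincides with the infimum over `[0,∞)`.) -/
noncomputable def legendreStar (φ : ℝ → ℝ) (lam : ℝ) : ℝ :=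
  sInf ((fun x => x * lam + φ x - φ 0) '' Set.Ici 0)

/-- Let `φ` be continuous on `[0,∞]` (continuity on `[0,∞)` plus a finite
limit `φtop` at `∞`) and convex on `(0,∞)`, with right derivative `φ'`. Then for every
`λ ∈ [0,∞)` one has `φ*(λ) = ∫_0^∞ min (λ + φ'(t)) 0 dt`. -/
theorem legendreStar_eq_integral_min
    (φ : ℝ → ℝ) (φtop : ℝ)
    (hc : ContinuousOn φ (Set.Ici 0))
    (htop : Filter.Tendsto φ Filter.atTop (nhds φtop))
    (hconv : ConvexOn ℝ (Set.Ioi 0) φ)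
    (φ' : ℝ → ℝ) (hφ' : ∀ t ∈ Set.Ioi (0 : ℝ), φ' t = derivWithin φ (Set.Ioi t) t)
    (lam : ℝ) (hlam : 0 ≤ lam) :
    legendreStar φ lam = ∫ t in Set.Ioi (0 : ℝ), min (lam + φ' t) 0 := by
  have hd : ∀ t ∈ Set.Ioi (0:ℝ), HasDerivWithinAt φ (φ' t) (Set.Ioi t) t := by
    intro t ht
    rw [hφ' t ht]
    exact convAux.hasDeriv hconv ht
  have hmono := convAux.mono hconv hd
  have hnp : ∀ t ∈ Set.Ioi (0:ℝ), φ' t ≤ 0 := fun t ht => convAux.nonpos htop hconv hd ht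
  unfold legendreStar
  by_cases hS : ∃ s, 0 < s ∧ 0 ≤ lam + φ' s
  · obtain ⟨s₀, hs₀⟩ := hS
    have hne : {s : ℝ | 0 < s ∧ 0 ≤ lam + φ' s}.Nonempty := ⟨s₀, hs₀⟩
    have hbdd : BddBelow {s : ℝ | 0 < s ∧ 0 ≤ lam + φ' s} := ⟨0, fun t ht => ht.1.le⟩
    set t₀ := sInf {s : ℝ | 0 < s ∧ 0 ≤ lam + φ' s} with ht₀_def
    have ht₀ : 0 ≤ t₀ := le_csInf hne fun t ht => ht.1.le
    have hS1 : ∀ t, 0 < t → t < t₀ → lam + φ' t < 0 := by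
      intro t h1 h2
      by_contra h
      push_neg at h
      exact absurd (csInf_le hbdd ⟨h1, h⟩) (not_le.2 h2)
    have hS2 : ∀ t, t₀ < t → 0 ≤ lam + φ' t := by
      intro t ht
      obtain ⟨s, hsS, hst⟩ := exists_lt_of_csInf_lt hne ht
      have h2 : φ' s ≤ φ' t := hmono hsS.1 (hsS.1.trans hst) hst.le
      have := hsS.2
      linarith
    obtain ⟨hPint, hPval⟩ := convAux.Pval lam hc htop hconv hd hmono ht₀
    have hg0 : Set.EqOn (fun t => min (lam + φ' t) 0) 0 (Set.Ioi t₀) := fun t ht =>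
      min_eq_right (hS2 t ht)
    have hgint2 : IntegrableOn (fun t => min (lam + φ' t) 0) (Set.Ioi t₀) := by
      rw [integrableOn_congr_fun hg0 measurableSet_Ioi]
      exact integrableOn_zero
    have hgI2 : ∫ t in Set.Ioi t₀, min (lam + φ' t) 0 = 0 := by
      rw [setIntegral_congr_fun measurableSet_Ioi hg0]
      simp
    have hgEq : Set.EqOn (fun t => min (lam + φ' t) 0) (fun t => lam + φ' t)
        (Set.Ioo 0 t₀) := fun t ht => min_eq_left (hS1 t ht.1 ht.2).le
    have hgint1 : IntegrableOn (fun t => min (lam + φ' t) 0) (Set.Ioc 0 t₀) := by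
      rw [integrableOn_Ioc_iff_integrableOn_Ioo, integrableOn_congr_fun hgEq measurableSet_Ioo]
      exact hPint.mono_set Set.Ioo_subset_Ioc_self
    have hgI1 : ∫ t in Set.Ioc 0 t₀, min (lam + φ' t) 0 = t₀ * lam + φ t₀ - φ 0 := by
      rw [integral_Ioc_eq_integral_Ioo, setIntegral_congr_fun measurableSet_Ioo hgEq,
        ← integral_Ioc_eq_integral_Ioo, hPval]
    have hI : ∫ t in Set.Ioi (0:ℝ), min (lam + φ' t) 0 = t₀ * lam + φ t₀ - φ 0 := by
      rw [← Set.Ioc_union_Ioi_eq_Ioi ht₀,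
        setIntegral_union Set.Ioc_disjoint_Ioi_same measurableSet_Ioi hgint1 hgint2,
        hgI1, hgI2, add_zero]
    rw [hI]
    refine IsLeast.csInf_eq ⟨⟨t₀, ht₀, rfl⟩, ?_⟩
    rintro y ⟨x, hx, rfl⟩
    obtain ⟨hQint, hQval⟩ := convAux.Pval lam hc htop hconv hd hmono (Set.mem_Ici.1 hx)
    simp only []
    rcases le_total t₀ x with hcase | hcase
    · have hunion : Set.Ioc 0 t₀ ∪ Set.Ioc t₀ x = Set.Ioc 0 x :=
        Set.Ioc_union_Ioc_eq_Ioc ht₀ hcase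
      have hi2 : IntegrableOn (fun t => lam + φ' t) (Set.Ioc t₀ x) :=
        hQint.mono_set (by rw [← hunion]; exact Set.subset_union_right)
      have hadd : ∫ t in Set.Ioc 0 x, (lam + φ' t)
          = (∫ t in Set.Ioc 0 t₀, (lam + φ' t)) + ∫ t in Set.Ioc t₀ x, (lam + φ' t) := by
        rw [← hunion, setIntegral_union (Set.Ioc_disjoint_Ioc_of_le le_rfl) measurableSet_Ioc hPint hi2]
      have hpos : 0 ≤ ∫ t in Set.Ioc t₀ x, (lam + φ' t) :=
        setIntegral_nonneg measurableSet_Ioc fun t ht => hS2 t ht.1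
      rw [hPval, hQval] at hadd
      linarith
    · have hunion : Set.Ioc 0 x ∪ Set.Ioc x t₀ = Set.Ioc 0 t₀ :=
        Set.Ioc_union_Ioc_eq_Ioc (Set.mem_Ici.1 hx) hcase
      have hi2 : IntegrableOn (fun t => lam + φ' t) (Set.Ioc x t₀) :=
        hPint.mono_set (by rw [← hunion]; exact Set.subset_union_right)
      have hadd : ∫ t in Set.Ioc 0 t₀, (lam + φ' t)
          = (∫ t in Set.Ioc 0 x, (lam + φ' t)) + ∫ t in Set.Ioc x t₀, (lam + φ' t) := by
        rw [← hunion, setIntegral_union (Set.Ioc_disjoint_Ioc_of_le le_rfl) measurableSet_Ioc hQint hi2]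
      have hneg : ∫ t in Set.Ioc x t₀, (lam + φ' t) ≤ 0 := by
        rw [integral_Ioc_eq_integral_Ioo]
        refine setIntegral_nonpos measurableSet_Ioo fun t ht => ?_
        exact (hS1 t (lt_of_le_of_lt (Set.mem_Ici.1 hx) ht.1) ht.2).le
      rw [hPval, hQval] at hadd
      linarith
  · push_neg at hS
    have hlam0 : lam = 0 := by
      refine le_antisymm ?_ hlam
      have hden : Tendsto (fun x : ℝ => x - 1) atTop atTop := by
        simpa [sub_eq_add_neg] using tendsto_atTop_add_const_right atTop (-1 : ℝ) tendsto_id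
      have htend0 : Tendsto (fun x : ℝ => (φ 1 - φ x) / (x - 1)) atTop (nhds 0) :=
        Tendsto.div_atTop ((tendsto_const_nhds (x := φ 1)).sub htop) hden
      refine ge_of_tendsto htend0 ?_
      filter_upwards [eventually_gt_atTop 1] with x hx
      have hsl : (φ x - φ 1) / (x - 1) ≤ φ' x := convAux.slope_le hconv hd one_pos hx
      have h1 : lam + φ' x < 0 := hS x (by linarith)
      have h3 : (φ 1 - φ x) / (x - 1) = -((φ x - φ 1) / (x - 1)) := by
        rw [← neg_div, neg_sub]
      linarith
    subst hlam0
    have hgcong : Set.EqOn (fun t => min (0 + φ' t) 0) φ' (Set.Ioi 0) := fun t ht => by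
      simp only [zero_add]
      exact min_eq_left (hnp t ht)
    rw [setIntegral_congr_fun measurableSet_Ioi hgcong,
      (convAux.ftcTop hc htop hconv hd hmono).2]
    have hlb : ∀ y ∈ (fun x => x * 0 + φ x - φ 0) '' Set.Ici 0, φtop - φ 0 ≤ y := by
      rintro y ⟨x, hx, rfl⟩
      have := convAux.ge_top hc htop hconv hd hmono (Set.mem_Ici.1 hx)
      simp only [mul_zero, zero_add]
      linarith
    refine le_antisymm ?_ (le_csInf ⟨_, ⟨0, Set.self_mem_Ici, rfl⟩⟩ hlb)
    have hbddI : BddBelow ((fun x => x * 0 + φ x - φ 0) '' Set.Ici 0) := ⟨φtop - φ 0, hlb⟩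
    have htend : Tendsto (fun n : ℕ => (n : ℝ) * 0 + φ (n : ℝ) - φ 0) atTop
        (nhds (φtop - φ 0)) := by
      simpa using (htop.comp tendsto_natCast_atTop_atTop).sub
        (tendsto_const_nhds (x := φ 0))
    refine ge_of_tendsto htend (Filter.Eventually.of_forall fun n => ?_)
    exact csInf_le hbddI ⟨(n : ℝ), Set.mem_Ici.2 (Nat.cast_nonneg n), rfl⟩
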